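/- Let p be an odd prime, ε a non-square in 𝔽_p, and let Z denote the subgroup of C_ns consisting of the scalar matrices λ·I with λ ∈ 𝔽_p^×. The quotient group C_ns/Z has exactly one element of order 2, namely the class of the matrix J = (0 1; ε 0). -/
import Mathlib


/-- The non-split Cartan set inside `GL₂(𝔽_p)`: invertible matrices of the
form `(a b; εb a)`. -/
def CnsSet (p : ℕ) [Fact (Nat.Prime p)] (ε : ZMod p) : Set (GL (Fin 2) (ZMod p)) :=
  {M | (M : Matrix (Fin 2) (Fin 2) (ZMod p)) 1 1 = (M : Matrix (Fin 2) (Fin 2) (ZMod p)) 0 0 ∧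
       (M : Matrix (Fin 2) (Fin 2) (ZMod p)) 1 0 = ε * (M : Matrix (Fin 2) (Fin 2) (ZMod p)) 0 1}

/-- Let `H = C_ns` and let `Z ≤ H` be the subgroup of nonzero scalar matrices.
The quotient `C_ns/Z` has exactly one element of order `2`, namely the class of
`J = (0 1; ε 0)`. -/
theorem nonsplit_cartan_quotient_unique_order_two (p : ℕ) [Fact (Nat.Prime p)]
    (hp : Odd p) (ε : ZMod p) (hε : ¬ ∃ x : ZMod p, x ^ 2 = ε)
    (H : Subgroup (GL (Fin 2) (ZMod p)))
    (hH : (H : Set (GL (Fin 2) (ZMod p))) = CnsSet p ε)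
    (Z : Subgroup H)
    (hZ : (Z : Set H) = {M : H | ∃ u : (ZMod p)ˣ,
      ((M : GL (Fin 2) (ZMod p)) : Matrix (Fin 2) (Fin 2) (ZMod p)) =
        (u : ZMod p) • (1 : Matrix (Fin 2) (Fin 2) (ZMod p))})
    [Z.Normal]
    (J : H)
    (hJ : ((J : GL (Fin 2) (ZMod p)) : Matrix (Fin 2) (Fin 2) (ZMod p)) = !![0, 1; ε, 0]) :
    ∀ x : H ⧸ Z, orderOf x = 2 ↔ x = QuotientGroup.mk J := by
  haveI : Fact (Nat.Prime 2) := ⟨Nat.prime_two⟩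
  have hεne : ε ≠ 0 := fun h => hε ⟨0, by simp [h]⟩
  have hp2 : (2 : ZMod p) ≠ 0 := by
    intro h
    have hd : p ∣ 2 := by
      have := (CharP.cast_eq_zero_iff (ZMod p) p 2).mp (by exact_mod_cast h)
      exact this
    have hpe : p = 2 := (Nat.prime_dvd_prime_iff_eq (Fact.out) Nat.prime_two).mp hd
    rw [hpe] at hp
    exact (by decide : ¬ Odd 2) hp
  -- membership in Z iff scalar
  have hmemZ : ∀ M : H, M ∈ Z ↔ ∃ u : (ZMod p)ˣ,
      ((M : GL (Fin 2) (ZMod p)) : Matrix (Fin 2) (Fin 2) (ZMod p)) =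
        (u : ZMod p) • (1 : Matrix (Fin 2) (Fin 2) (ZMod p)) := by
    intro M
    have := Set.ext_iff.mp hZ M
    simpa using this
  -- entries of an element of H
  have hent : ∀ M : H,
      ((M : GL (Fin 2) (ZMod p)) : Matrix (Fin 2) (Fin 2) (ZMod p)) 1 1 =
        ((M : GL (Fin 2) (ZMod p)) : Matrix (Fin 2) (Fin 2) (ZMod p)) 0 0 ∧
      ((M : GL (Fin 2) (ZMod p)) : Matrix (Fin 2) (Fin 2) (ZMod p)) 1 0 =
        ε * ((M : GL (Fin 2) (ZMod p)) : Matrix (Fin 2) (Fin 2) (ZMod p)) 0 1 := by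
    intro M
    have h2 : (M : GL (Fin 2) (ZMod p)) ∈ CnsSet p ε := by
      rw [← hH]; exact M.2
    exact h2
  -- matrices of elements of GL are nonzero
  have hmatne : ∀ M : H,
      ((M : GL (Fin 2) (ZMod p)) : Matrix (Fin 2) (Fin 2) (ZMod p)) ≠ 0 := by
    intro M h
    have h1 := (M : GL (Fin 2) (ZMod p)).mul_inv
    rw [h, zero_mul] at h1
    have := congrFun (congrFun h1 0) 0
    simp [Matrix.one_apply] at this
  -- coe of product
  have hmul : ∀ M N : H,
      (((M * N : H) : GL (Fin 2) (ZMod p)) : Matrix (Fin 2) (Fin 2) (ZMod p)) =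
        ((M : GL (Fin 2) (ZMod p)) : Matrix (Fin 2) (Fin 2) (ZMod p)) *
        ((N : GL (Fin 2) (ZMod p)) : Matrix (Fin 2) (Fin 2) (ZMod p)) := by
    intro M N
    simp
  -- J² ∈ Z
  have hJJ : J * J ∈ Z := by
    rw [hmemZ]
    refine ⟨Units.mk0 ε hεne, ?_⟩
    rw [hmul, hJ]
    ext i j
    fin_cases i <;> fin_cases j <;>
      simp [Matrix.mul_fin_two, Matrix.one_apply]
  -- J ∉ Z
  have hJZ : J ∉ Z := by
    rw [hmemZ]
    rintro ⟨u, hu⟩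
    rw [hJ] at hu
    have := congrFun (congrFun hu 0) 1
    simp [Matrix.one_apply] at this
  have hmkJ2 : (QuotientGroup.mk J : H ⧸ Z) * QuotientGroup.mk J = 1 := by
    rw [← QuotientGroup.mk_mul, QuotientGroup.eq_one_iff]
    exact hJJ
  have hmkJne : (QuotientGroup.mk J : H ⧸ Z) ≠ 1 := by
    rw [Ne, QuotientGroup.eq_one_iff]
    exact hJZ
  have hinvJ : (QuotientGroup.mk J : H ⧸ Z)⁻¹ = QuotientGroup.mk J :=
    inv_eq_of_mul_eq_one_right hmkJ2
  intro x
  constructor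
  · intro hx
    obtain ⟨M, rfl⟩ := QuotientGroup.mk_surjective x
    have h2 : (QuotientGroup.mk M : H ⧸ Z) * QuotientGroup.mk M = 1 := by
      have := pow_orderOf_eq_one (QuotientGroup.mk M : H ⧸ Z)
      rw [hx, sq] at this
      exact this
    have hne1 : (QuotientGroup.mk M : H ⧸ Z) ≠ 1 := by
      intro h
      rw [h, orderOf_one] at hx
      norm_num at hx
    have hMZ : M ∉ Z := by
      intro h
      exact hne1 ((QuotientGroup.eq_one_iff M).mpr h)
    have hM2 : M * M ∈ Z := by
      rw [← QuotientGroup.eq_one_iff, QuotientGroup.mk_mul]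
      exact h2
    set a := ((M : GL (Fin 2) (ZMod p)) : Matrix (Fin 2) (Fin 2) (ZMod p)) 0 0 with ha
    set b := ((M : GL (Fin 2) (ZMod p)) : Matrix (Fin 2) (Fin 2) (ZMod p)) 0 1 with hb
    have hMeta : ((M : GL (Fin 2) (ZMod p)) : Matrix (Fin 2) (Fin 2) (ZMod p)) =
        !![a, b; ε * b, a] := by
      rw [Matrix.eta_fin_two ((M : GL (Fin 2) (ZMod p)) : Matrix (Fin 2) (Fin 2) (ZMod p))]
      rw [(hent M).1, (hent M).2]
    obtain ⟨u, hu⟩ := (hmemZ _).mp hM2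
    rw [hmul, hMeta] at hu
    have h01 : a * b + b * a = 0 := by
      have := congrFun (congrFun hu 0) 1
      simpa [Matrix.mul_fin_two, Matrix.one_apply] using this
    have hab : a * b = 0 := by
      have : 2 * (a * b) = 0 := by ring_nf; linear_combination h01
      rcases mul_eq_zero.mp this with h | h
      · exact absurd h hp2
      · exact h
    rcases mul_eq_zero.mp hab with hA | hB
    · -- a = 0 : M = b J, so M * J is scalar
      have hbne : b ≠ 0 := by
        intro hb0
        apply hmatne M
        rw [hMeta, hA, hb0]
        ext i j
        fin_cases i <;> fin_cases j <;> simp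
      have hMJ : M * J ∈ Z := by
        rw [hmemZ]
        refine ⟨Units.mk0 (b * ε) (mul_ne_zero hbne hεne), ?_⟩
        rw [hmul, hMeta, hJ, hA]
        ext i j
        fin_cases i <;> fin_cases j <;>
          simp [Matrix.mul_fin_two, Matrix.one_apply, mul_comm]
      have : (QuotientGroup.mk M : H ⧸ Z) * QuotientGroup.mk J = 1 := by
        rw [← QuotientGroup.mk_mul, QuotientGroup.eq_one_iff]
        exact hMJ
      calc (QuotientGroup.mk M : H ⧸ Z) = (QuotientGroup.mk J : H ⧸ Z)⁻¹ :=
            eq_inv_of_mul_eq_one_left this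
        _ = QuotientGroup.mk J := hinvJ
    · -- b = 0 : M scalar, contradiction
      exfalso
      apply hMZ
      have hane : a ≠ 0 := by
        intro ha0
        apply hmatne M
        rw [hMeta, hB, ha0]
        ext i j
        fin_cases i <;> fin_cases j <;> simp
      rw [hmemZ]
      refine ⟨Units.mk0 a hane, ?_⟩
      rw [hMeta, hB]
      ext i j
      fin_cases i <;> fin_cases j <;> simp [Matrix.one_apply]
  · intro hx
    subst hx
    exact orderOf_eq_prime (by rw [sq]; exact hmkJ2) hmkJne
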